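/- Let V = {1, …, n} and suppose for each i ∈ V the function V_i : ℝ × ℝ^m → ℝ is continuously differentiable, and x : ℝ → ℝ^m is differentiable. Define V(t) = max_{i∈V} V_i(t, x(t)), and let V₁(t) = {i ∈ V : V_i(t, x(t)) = V(t)} be the set of indices at which the maximum is attained at time t. Then the upper Dini derivative of V satisfies D⁺V(t) = max_{i∈V₁(t)} (d/dt)V_i(t, x(t)). -/

import Mathlib

open scoped Topology BigOperators


theorem dini_max (n : ℕ) (hn : 0 < n) (f : Fin n → ℝ → ℝ) (t : ℝ)
    (hfd : ∀ i, Differentiable ℝ (f i)) :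
    Filter.limsup (fun τ => ((⨆ i, f i (t + τ)) - ⨆ i, f i t) / τ) (𝓝[>] (0:ℝ))
      = ⨆ i : {i : Fin n // f i t = ⨆ j, f j t}, deriv (f i.1) t := by
  haveI : Nonempty (Fin n) := ⟨⟨0, hn⟩⟩
  obtain ⟨j₀, hj₀⟩ := Finite.exists_max (fun j => f j t)
  have hSj₀ : f j₀ t = ⨆ j, f j t :=
    le_antisymm (le_ciSup (f := fun j => f j t) (Set.finite_range _).bddAbove j₀) (ciSup_le hj₀)
  haveI hAne : Nonempty {i : Fin n // f i t = ⨆ j, f j t} := ⟨⟨j₀, hSj₀⟩⟩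
  set S := ⨆ j, f j t with hS
  set d : Fin n → ℝ := fun i => deriv (f i) t with hd
  obtain ⟨i₁, hi₁⟩ := Finite.exists_max (fun i : {i : Fin n // f i t = S} => d i.1)
  set M := ⨆ i : {i : Fin n // f i t = S}, d i.1 with hM
  have hMi₁ : M = d i₁.1 :=
    le_antisymm (ciSup_le hi₁) (le_ciSup (f := fun i : {i : Fin n // f i t = S} => d i.1) (Set.finite_range _).bddAbove i₁)
  have hmap : Filter.Tendsto (fun τ : ℝ => t + τ) (𝓝[>] (0:ℝ)) (𝓝[≠] t) := by
    rw [tendsto_nhdsWithin_iff]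
    constructor
    · have h0 : Filter.Tendsto (fun τ : ℝ => t + τ) (𝓝 (0:ℝ)) (𝓝 (t + 0)) :=
        (continuous_const.add continuous_id).tendsto 0
      simpa using h0.mono_left nhdsWithin_le_nhds
    · filter_upwards [self_mem_nhdsWithin] with τ (hτ : (0:ℝ) < τ)
      simpa using (lt_add_of_pos_right t hτ).ne'
  have hq : ∀ i, Filter.Tendsto (fun τ => (f i (t + τ) - f i t) / τ) (𝓝[>] (0:ℝ)) (𝓝 (d i)) := by
    intro i
    have h1 : Filter.Tendsto (slope (f i) t) (𝓝[≠] t) (𝓝 (d i)) :=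
      hasDerivAt_iff_tendsto_slope.1 ((hfd i) t).hasDerivAt
    refine (h1.comp hmap).congr ?_
    intro τ
    simp [slope, Function.comp, add_sub_cancel_left, div_eq_inv_mul]
  have hE2 : ∀ᶠ τ in 𝓝[>] (0:ℝ),
      (⨆ j, f j (t + τ)) = ⨆ i : {i : Fin n // f i t = S}, f i.1 (t + τ) := by
    have hper : ∀ j : Fin n, ∀ᶠ τ in 𝓝[>] (0:ℝ),
        f j (t + τ) ≤ ⨆ i : {i : Fin n // f i t = S}, f i.1 (t + τ) := by
      intro j
      by_cases hj : f j t = S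
      · exact Filter.Eventually.of_forall fun τ =>
          le_ciSup (f := fun i : {i : Fin n // f i t = S} => f i.1 (t + τ)) (Set.finite_range _).bddAbove (⟨j, hj⟩ : {i : Fin n // f i t = S})
      · have hjle : f j t ≤ S := le_ciSup (f := fun j => f j t) (Set.finite_range _).bddAbove j
        have hjlt : f j t < S := lt_of_le_of_ne hjle hj
        have hcont : Filter.Tendsto (fun τ => f i₁.1 (t + τ) - f j (t + τ)) (𝓝[>] (0:ℝ))
            (𝓝 (f i₁.1 t - f j t)) := by
          have h1 : Filter.Tendsto (fun τ : ℝ => t + τ) (𝓝[>] (0:ℝ)) (𝓝 t) := by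
            have h0 : Filter.Tendsto (fun τ : ℝ => t + τ) (𝓝 (0:ℝ)) (𝓝 (t + 0)) :=
              (continuous_const.add continuous_id).tendsto 0
            simpa using h0.mono_left nhdsWithin_le_nhds
          exact (((hfd i₁.1).continuous.tendsto _).comp h1).sub
            (((hfd j).continuous.tendsto _).comp h1)
        have hpos : (0:ℝ) < f i₁.1 t - f j t := by
          have := i₁.2; linarith [hjlt, this.ge, this.le]
        filter_upwards [hcont.eventually (eventually_gt_nhds hpos)] with τ hτ
        have : f j (t + τ) ≤ f i₁.1 (t + τ) := by linarith
        exact this.trans (le_ciSup (f := fun i : {i : Fin n // f i t = S} => f i.1 (t + τ)) (Set.finite_range _).bddAbove i₁)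
    filter_upwards [Filter.eventually_all.2 hper] with τ hτ
    exact le_antisymm (ciSup_le hτ)
      (ciSup_le fun i => le_ciSup (f := fun j => f j (t + τ)) (Set.finite_range _).bddAbove i.1)
  have key : Filter.Tendsto (fun τ => ((⨆ i, f i (t + τ)) - S) / τ) (𝓝[>] (0:ℝ)) (𝓝 M) := by
    rw [Metric.tendsto_nhds]
    intro ε hε
    have hEq : ∀ᶠ τ in 𝓝[>] (0:ℝ), ∀ i : {i : Fin n // f i t = S},
        |(f i.1 (t + τ) - f i.1 t) / τ - d i.1| < ε/2 := by
      rw [Filter.eventually_all]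
      intro i
      have := (Metric.tendsto_nhds.1 (hq i.1)) (ε/2) (by positivity)
      simpa [Real.dist_eq] using this
    filter_upwards [hE2, hEq, self_mem_nhdsWithin] with τ hτ2 hτq (hτ : (0:ℝ) < τ)
    rw [hτ2, Real.dist_eq]
    have hbd : BddAbove (Set.range fun i : {i : Fin n // f i t = S} => f i.1 (t + τ)) :=
      (Set.finite_range _).bddAbove
    have hupper : (⨆ i : {i : Fin n // f i t = S}, f i.1 (t + τ)) ≤ S + τ * (M + ε/2) := by
      apply ciSup_le
      intro i
      have h1 := (abs_lt.1 (hτq i)).2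
      have h2 : d i.1 ≤ M := le_ciSup (f := fun i : {i : Fin n // f i t = S} => d i.1) (Set.finite_range _).bddAbove i
      have h3 : f i.1 t = S := i.2
      have h4 : (f i.1 (t + τ) - f i.1 t) / τ ≤ d i.1 + ε/2 := by linarith
      rw [div_le_iff₀ hτ] at h4
      nlinarith
    have hlower : S + τ * (M - ε/2) ≤ ⨆ i : {i : Fin n // f i t = S}, f i.1 (t + τ) := by
      have h1 := (abs_lt.1 (hτq i₁)).1
      have h2 : M - ε/2 ≤ (f i₁.1 (t + τ) - f i₁.1 t) / τ := by rw [hMi₁]; linarith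
      rw [le_div_iff₀ hτ] at h2
      have h3 : f i₁.1 t = S := i₁.2
      have h5 : f i₁.1 (t + τ) ≤ ⨆ i : {i : Fin n // f i t = S}, f i.1 (t + τ) :=
        le_ciSup hbd i₁
      nlinarith
    rw [abs_lt]
    constructor
    · have h6 : M - ε/2 ≤ ((⨆ i : {i : Fin n // f i t = S}, f i.1 (t + τ)) - S) / τ := by
        rw [le_div_iff₀ hτ]; nlinarith
      linarith
    · have h6 : ((⨆ i : {i : Fin n // f i t = S}, f i.1 (t + τ)) - S) / τ ≤ M + ε/2 := by
        rw [div_le_iff₀ hτ]; nlinarith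
      linarith
  exact key.limsup_eq

/-- (Danskin-type lemma for Dini derivatives.) If each `Vᵢ` is C¹ and
`x` is differentiable, then the upper Dini derivative of `t ↦ maxᵢ Vᵢ(t, x(t))` equals
the maximum of the derivatives `(d/dt)Vᵢ(t, x(t))` over the active index set
`V₁(t) = {i : Vᵢ(t, x(t)) = maxⱼ Vⱼ(t, x(t))}`. -/
theorem statement4
    (m n : ℕ) (hn : 0 < n)
    (V : Fin n → ℝ × EuclideanSpace ℝ (Fin m) → ℝ)
    (hV : ∀ i, ContDiff ℝ 1 (V i))
    (x : ℝ → EuclideanSpace ℝ (Fin m))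
    (hx : Differentiable ℝ x)
    (t : ℝ) :
    Filter.limsup
        (fun τ => ((⨆ i, V i (t + τ, x (t + τ))) - ⨆ i, V i (t, x t)) / τ)
        (𝓝[>] (0 : ℝ))
      = ⨆ i : {i : Fin n // V i (t, x t) = ⨆ j, V j (t, x t)},
          deriv (fun s => V i.1 (s, x s)) t := by
  exact dini_max n hn (fun i s => V i (s, x s)) t
    (fun i => ((hV i).differentiable one_ne_zero).comp (differentiable_id.prodMk hx))
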